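/- Fix an integer $n \geq 2$ and $m \in \{n, n+1\}$, and let $\mathfrak{g}$ be the vector space with basis $h_1,\dots,h_n$ equipped with the bracket $[h_1,\cdot]=0$ and, for $2 \leq i,j \leq n$, $[h_i,h_j] = -(j-i)\, h_{i+j-(n-m+2)}$ (with $h_k = 0$ for $k \leq 0$ or $k > n$). Then this bracket satisfies the Jacobi identity; moreover, for $m = n+1$ the Lie algebra $\mathfrak{g}$ is nilpotent, while for $m = n$ the subalgebra $\mathrm{span}\{h_1,\dots,h_{n-1}\}$ (in the reordered basis $h_1' = h_1$, $h_i' = h_{n-i+2}$) is nilpotent of codimension one in $\mathfrak{g}$. -/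

import Mathlib

/-- Structure constants of the quasi-Stäckel algebra for `m ∈ {n, n+1}` (0-based
indices): `strC2 n m i j k` is the coefficient of `h_{k+1}` in `[h_{i+1}, h_{j+1}]`,
encoding `[hᵢ,hⱼ] = -(j-i) h_{i+j-(n-m+2)}` for `i,j ≥ 2`, `[h₁,·] = 0`, with
`h_k = 0` for `k ≤ 0` or `k > n` (the index shift is computed in `ℤ`). -/
def strC2 (n m : ℕ) (i j k : Fin n) : ℝ :=
  if 1 ≤ i.val ∧ 1 ≤ j.val ∧
      ((k.val : ℤ) + 1 = ((i.val : ℤ) + 1) + ((j.val : ℤ) + 1) - ((n : ℤ) - (m : ℤ) + 2))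
  then -((j.val : ℝ) - (i.val : ℝ)) else 0

/-- The corresponding bilinear bracket on `ℝⁿ` (coordinates w.r.t. the basis `hᵢ`). -/
def qsBr2 (n m : ℕ) (x y : Fin n → ℝ) : Fin n → ℝ :=
  fun k => ∑ i, ∑ j, x i * y j * strC2 n m i j k

lemma strC2_antisymm (n m : ℕ) (i j k : Fin n) :
    strC2 n m i j k = - strC2 n m j i k := by
  unfold strC2
  split_ifs with h1 h2 h2 <;> first | ring1 | (exfalso; omega)

lemma sumT (n m : ℕ) (hmn : n ≤ m) (hmn2 : m ≤ n + 1) (a b c k : Fin n) :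
    ∑ j, strC2 n m a b j * strC2 n m c j k =
      if 1 ≤ a.val ∧ 1 ≤ b.val ∧ 1 ≤ c.val ∧
          ((k.val:ℤ) + 1 = (a.val:ℤ) + (b.val:ℤ) + (c.val:ℤ) + 3 - 2*((n:ℤ)-(m:ℤ)+2))
      then ((b.val:ℝ)-(a.val:ℝ)) *
          (((a.val:ℝ)+(b.val:ℝ)+1-((n:ℝ)-(m:ℝ)+2))-(c.val:ℝ))
      else 0 := by
  split_ifs with hcond
  · obtain ⟨ha, hb, hc, hk⟩ := hcond
    have hj0 : a.val + b.val + 1 - (n + 2 - m) < n := by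
      have := k.isLt; omega
    set j₀ : Fin n := ⟨a.val + b.val + 1 - (n + 2 - m), hj0⟩ with hj₀def
    have hval : j₀.val = a.val + b.val + 1 - (n + 2 - m) := rfl
    rw [Finset.sum_eq_single j₀]
    · have hjv : (j₀.val:ℤ) = (a.val:ℤ) + (b.val:ℤ) + 1 - ((n:ℤ)-(m:ℤ)+2) := by omega
      have hjr : (j₀.val : ℝ) = (a.val:ℝ) + (b.val:ℝ) + 1 - ((n:ℝ)-(m:ℝ)+2) := by
        have h2 := congrArg (fun t : ℤ => (t : ℝ)) hjv
        push_cast at h2 ⊢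
        linarith
      have hA : 1 ≤ a.val ∧ 1 ≤ b.val ∧
          ((j₀.val:ℤ) + 1 = ((a.val:ℤ)+1) + ((b.val:ℤ)+1) - ((n:ℤ)-(m:ℤ)+2)) := by omega
      have hB : 1 ≤ c.val ∧ 1 ≤ j₀.val ∧
          ((k.val:ℤ) + 1 = ((c.val:ℤ)+1) + ((j₀.val:ℤ)+1) - ((n:ℤ)-(m:ℤ)+2)) := by omega
      unfold strC2
      rw [if_pos hA, if_pos hB, hjr]
      ring
    · intro j _ hj
      have hjne : j.val ≠ a.val + b.val + 1 - (n + 2 - m) :=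
        fun h => hj (Fin.ext h)
      unfold strC2
      split_ifs with h1 h2 h2 <;> first | ring1 | (exfalso; omega)
    · intro h; exact absurd (Finset.mem_univ _) h
  · apply Finset.sum_eq_zero
    intro j _
    unfold strC2
    split_ifs with h1 h2 h2 <;> first | ring1 | (exfalso; omega)

lemma keyJ (n m : ℕ) (hmn : n ≤ m) (hmn2 : m ≤ n + 1) (p q i k : Fin n) :
    (∑ j, strC2 n m p q j * strC2 n m i j k) +
    (∑ j, strC2 n m q i j * strC2 n m p j k) +
    (∑ j, strC2 n m i p j * strC2 n m q j k) = 0 := by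
  rw [sumT n m hmn hmn2 p q i k, sumT n m hmn hmn2 q i p k, sumT n m hmn hmn2 i p q k]
  by_cases h : 1 ≤ p.val ∧ 1 ≤ q.val ∧ 1 ≤ i.val ∧
      ((k.val:ℤ) + 1 = (p.val:ℤ) + (q.val:ℤ) + (i.val:ℤ) + 3 - 2*((n:ℤ)-(m:ℤ)+2))
  · rw [if_pos (by omega), if_pos (by omega), if_pos (by omega)]
    ring
  · rw [if_neg (by omega), if_neg (by omega), if_neg (by omega)]
    ring

lemma rot3 {M : Type*} [AddCommMonoid M] {α β γ : Type*}
    (s : Finset α) (t : Finset β) (u : Finset γ) (f : α → β → γ → M) :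
    ∑ a ∈ s, ∑ b ∈ t, ∑ c ∈ u, f a b c = ∑ c ∈ u, ∑ a ∈ s, ∑ b ∈ t, f a b c := by
  have h1 : ∀ a ∈ s, ∑ b ∈ t, ∑ c ∈ u, f a b c = ∑ c ∈ u, ∑ b ∈ t, f a b c :=
    fun a _ => Finset.sum_comm
  rw [Finset.sum_congr rfl h1, Finset.sum_comm]

lemma expand (n m : ℕ) (x y z : Fin n → ℝ) (k : Fin n) :
    qsBr2 n m x (qsBr2 n m y z) k
      = ∑ i, ∑ p, ∑ q, x i * y p * z q * (∑ j, strC2 n m p q j * strC2 n m i j k) := by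
  unfold qsBr2
  apply Finset.sum_congr rfl; intro i _
  simp only [Finset.sum_mul, Finset.mul_sum]
  rw [Finset.sum_comm]
  apply Finset.sum_congr rfl; intro p _
  rw [Finset.sum_comm]
  apply Finset.sum_congr rfl; intro q _
  apply Finset.sum_congr rfl; intro j _
  ring

lemma jacobi (n m : ℕ) (hmn : n ≤ m) (hmn2 : m ≤ n + 1) (x y z : Fin n → ℝ) :
    qsBr2 n m x (qsBr2 n m y z) + qsBr2 n m y (qsBr2 n m z x)
      + qsBr2 n m z (qsBr2 n m x y) = 0 := by
  funext k
  simp only [Pi.add_apply, Pi.zero_apply]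
  rw [expand, expand, expand]
  rw [rot3 Finset.univ Finset.univ Finset.univ
      (fun i p q => y i * z p * x q * (∑ j, strC2 n m p q j * strC2 n m i j k))]
  rw [rot3 Finset.univ Finset.univ Finset.univ
      (fun i p q => z i * x p * y q * (∑ j, strC2 n m p q j * strC2 n m i j k)),
    rot3 Finset.univ Finset.univ Finset.univ
      (fun q i p => z i * x p * y q * (∑ j, strC2 n m p q j * strC2 n m i j k))]
  simp only [← Finset.sum_add_distrib]
  apply Finset.sum_eq_zero; intro i _
  apply Finset.sum_eq_zero; intro p _
  apply Finset.sum_eq_zero; intro q _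
  have hk := keyJ n m hmn hmn2 p q i k
  linear_combination (x i * y p * z q) * hk

lemma qsBr2_antisymm (n m : ℕ) (x y : Fin n → ℝ) :
    qsBr2 n m x y = -qsBr2 n m y x := by
  funext k
  show (∑ i, ∑ j, x i * y j * strC2 n m i j k) = -(∑ i, ∑ j, y i * x j * strC2 n m i j k)
  rw [Finset.sum_comm (f := fun i j => y i * x j * strC2 n m i j k)]
  rw [← Finset.sum_neg_distrib]
  apply Finset.sum_congr rfl; intro i _
  rw [← Finset.sum_neg_distrib]
  apply Finset.sum_congr rfl; intro j _
  rw [strC2_antisymm n m i j k]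
  ring

-- the step lemma for nilpotency, m = n+1 case
lemma stepN1 (n : ℕ) (t : ℕ) (x y : Fin n → ℝ)
    (hy : ∀ j : Fin n, j.val < t → y j = 0) :
    ∀ k : Fin n, k.val < t + 1 → qsBr2 n (n+1) x y k = 0 := by
  intro k hk
  apply Finset.sum_eq_zero; intro i _
  apply Finset.sum_eq_zero; intro j _
  by_cases h : 1 ≤ i.val ∧ 1 ≤ j.val ∧
      ((k.val : ℤ) + 1 = ((i.val : ℤ) + 1) + ((j.val : ℤ) + 1) - ((n : ℤ) - ((n:ℕ)+1 : ℕ) + 2))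
  · have hj : j.val < t := by push_cast at h; omega
    rw [hy j hj]; ring
  · unfold strC2
    rw [if_neg (by push_cast at h ⊢; omega)]
    ring

-- the step lemma for nilpotency of the hyperplane, m = n case
lemma stepN0 (n : ℕ) (hn : 2 ≤ n) (t : ℕ) (x y : Fin n → ℝ)
    (hx : x ⟨1, by linarith⟩ = 0)
    (hy : ∀ j : Fin n, j.val < t → y j = 0) :
    ∀ k : Fin n, k.val < t + 1 → qsBr2 n n x y k = 0 := by
  intro k hk
  apply Finset.sum_eq_zero; intro i _
  apply Finset.sum_eq_zero; intro j _
  by_cases h : 1 ≤ i.val ∧ 1 ≤ j.val ∧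
      ((k.val : ℤ) + 1 = ((i.val : ℤ) + 1) + ((j.val : ℤ) + 1) - ((n : ℤ) - (n : ℤ) + 2))
  · by_cases hi : i.val = 1
    · have : i = ⟨1, by omega⟩ := Fin.ext hi
      rw [this, hx]; ring
    · have hj : j.val < t := by omega
      rw [hy j hj]; ring
  · unfold strC2
    rw [if_neg h]
    ring

/-- for `m ∈ {n, n+1}` the bracket `[hᵢ,hⱼ] = -(j-i) h_{i+j-(n-m+2)}`,
`[h₁,·]=0`, satisfies the Jacobi identity (and is alternating), so it makes `ℝⁿ` a Lie
algebra; for `m = n+1` this Lie algebra is nilpotent, while for `m = n` the span of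
`h₁,h₃,h₄,…,hₙ` (the reordered basis `h₁' = h₁`, `hᵢ' = h_{n-i+2}`, `i ≤ n-1`), i.e.
the hyperplane of vectors with vanishing `h₂`-coordinate, is a nilpotent subalgebra of
codimension one. -/
theorem stmt15 (n m : ℕ) (hn : 2 ≤ n) (hm : m = n ∨ m = n + 1) :
    (∀ x : Fin n → ℝ, qsBr2 n m x x = 0) ∧
    (∀ x y : Fin n → ℝ, qsBr2 n m x y = -qsBr2 n m y x) ∧
    (∀ x y z : Fin n → ℝ,
      qsBr2 n m x (qsBr2 n m y z) + qsBr2 n m y (qsBr2 n m z x)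
        + qsBr2 n m z (qsBr2 n m x y) = 0) ∧
    (m = n + 1 → ∃ N : ℕ, ∀ (x : ℕ → Fin n → ℝ) (y : Fin n → ℝ),
      Nat.rec (motive := fun _ => Fin n → ℝ) y (fun l acc => qsBr2 n m (x l) acc) N = 0) ∧
    (m = n →
      -- the hyperplane {x | x₂-coordinate = 0} is closed under the bracket …
      (∀ x y : Fin n → ℝ, x ⟨1, by omega⟩ = 0 → y ⟨1, by omega⟩ = 0 →
        qsBr2 n m x y ⟨1, by omega⟩ = 0) ∧
      -- … is nilpotent …
      (∃ N : ℕ, ∀ (x : ℕ → Fin n → ℝ), (∀ l, x l ⟨1, by omega⟩ = 0) →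
        ∀ y : Fin n → ℝ, y ⟨1, by omega⟩ = 0 →
        Nat.rec (motive := fun _ => Fin n → ℝ) y (fun l acc => qsBr2 n m (x l) acc) N = 0) ∧
      -- … and has codimension one
      Module.finrank ℝ
        (LinearMap.ker (LinearMap.proj (R := ℝ) (φ := fun _ : Fin n => ℝ) ⟨1, by omega⟩))
        = n - 1) := by
  have hmn : n ≤ m := by omega
  have hmn2 : m ≤ n + 1 := by omega
  refine ⟨?_, qsBr2_antisymm n m, jacobi n m hmn hmn2, ?_, ?_⟩
  · -- alternating
    intro x
    funext k
    have h := congrFun (qsBr2_antisymm n m x x) k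
    simp only [Pi.neg_apply] at h
    have : qsBr2 n m x x k = 0 := by linarith
    simpa using this
  · -- m = n + 1 : nilpotent
    intro hm4
    subst hm4
    refine ⟨n, ?_⟩
    intro x y
    have key : ∀ L, ∀ k : Fin n, k.val < L →
        Nat.rec (motive := fun _ => Fin n → ℝ) y
          (fun l acc => qsBr2 n (n+1) (x l) acc) L k = 0 := by
      intro L
      induction L with
      | zero => intro k hk; exact absurd hk (by omega)
      | succ L ih => exact stepN1 n L (x L) _ ih
    funext k
    exact key n k k.isLt
  · -- m = n
    intro hm5
    subst hm5
    refine ⟨?_, ?_, ?_⟩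
    · -- hyperplane closed under bracket
      intro x y _ _
      apply Finset.sum_eq_zero; intro i _
      apply Finset.sum_eq_zero; intro j _
      have hk1 : (⟨1, by omega⟩ : Fin m).val = 1 := rfl
      unfold strC2
      split_ifs with h
      · have hij : i.val = 1 ∧ j.val = 1 := by omega
        have : (j.val : ℝ) = (i.val : ℝ) := by rw [hij.1, hij.2]
        rw [this]; ring
      · ring
    · -- nilpotent
      refine ⟨m, ?_⟩
      intro x hx y hy
      have key : ∀ L, ∀ k : Fin m, k.val < L →
          Nat.rec (motive := fun _ => Fin m → ℝ) y
            (fun l acc => qsBr2 m m (x l) acc) L k = 0 := by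
        intro L
        induction L with
        | zero => intro k hk; exact absurd hk (by omega)
        | succ L ih => exact stepN0 m hn L (x L) _ (hx L) ih
      funext k
      exact key m k k.isLt
    · -- codimension one
      set p := LinearMap.proj (R := ℝ) (φ := fun _ : Fin m => ℝ) ⟨1, by omega⟩ with hp
      have hsurj : Function.Surjective p := fun r => ⟨fun _ => r, rfl⟩
      have h2 := LinearMap.finrank_range_add_finrank_ker p
      rw [LinearMap.range_eq_top.mpr hsurj, finrank_top, Module.finrank_self,
        Module.finrank_fintype_fun_eq_card, Fintype.card_fin] at h2
      omega
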